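/- Let g : [0,∞) → ℝ be a positive, increasing, differentiable function, let q ∈ (0,1), let k ≥ 1, and let λ ≥ μ > 0 be real numbers. Then for all x, y with 0 < x < y, the following double inequality holds: (1−q)^{λ(g(0)−g(x))}·Γ_q(g(0))^λ / ((1−q)^{(μ/k)(g(0)−g(x))}·Γ_{(q,k)}(g(0))^μ) ≥ Γ_q(g(x))^λ / Γ_{(q,k)}(g(x))^μ ≥ (1−q)^{λ(g(y)−g(x))}·Γ_q(g(y))^λ / ((1−q)^{(μ/k)(g(y)−g(x))}·Γ_{(q,k)}(g(y))^μ). -/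

import Mathlib

open Real

/-- `[p]_q = (1 - q^p)/(1 - q)` -/
noncomputable def pnq (p : ℕ) (q : ℝ) : ℝ := (1 - q ^ p) / (1 - q)

/-- q-psi function via its series representation. -/
noncomputable def psiq (q s : ℝ) : ℝ :=
  -Real.log (1 - q) + Real.log q * ∑' n : ℕ, q ^ (((n : ℝ) + 1) * s) / (1 - q ^ (n + 1))

/-- (p,q)-psi function via its series representation. -/
noncomputable def psipq (p : ℕ) (q s : ℝ) : ℝ :=
  Real.log (pnq p q) +
    Real.log q * ∑ n ∈ Finset.range p, q ^ (((n : ℝ) + 1) * s) / (1 - q ^ (n + 1))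

/-- k-psi function via its series representation. -/
noncomputable def psik (k s : ℝ) : ℝ :=
  (Real.log k - Real.eulerMascheroniConstant) / k - 1 / s +
    ∑' n : ℕ, s / (((n : ℝ) + 1) * k * (((n : ℝ) + 1) * k + s))

/-- (q,k)-psi function via its series representation. -/
noncomputable def psiqk (q k s : ℝ) : ℝ :=
  -Real.log (1 - q) / k +
    Real.log q * ∑' n : ℕ, q ^ (((n : ℝ) + 1) * k * s) / (1 - q ^ (((n : ℝ) + 1) * k))

/-- Normalized q-Gamma function. -/
noncomputable def Gammaq (q s : ℝ) : ℝ :=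
  (1 - q) ^ (-s) *
    Real.exp (∑' n : ℕ, q ^ (((n : ℝ) + 1) * s) / (((n : ℝ) + 1) * (1 - q ^ (n + 1))))

/-- Normalized (p,q)-Gamma function. -/
noncomputable def Gammapq (p : ℕ) (q s : ℝ) : ℝ :=
  (pnq p q) ^ s *
    Real.exp (∑ n ∈ Finset.range p, q ^ (((n : ℝ) + 1) * s) / (((n : ℝ) + 1) * (1 - q ^ (n + 1))))

/-- Normalized (q,k)-Gamma function. -/
noncomputable def Gammaqk (q k s : ℝ) : ℝ :=
  (1 - q) ^ (-s / k) *
    Real.exp (∑' n : ℕ,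
      q ^ (((n : ℝ) + 1) * k * s) / (((n : ℝ) + 1) * k * (1 - q ^ (((n : ℝ) + 1) * k))))

/-- k-Gamma function. -/
noncomputable def Gammak (k s : ℝ) : ℝ :=
  ∫ x in Set.Ioi (0 : ℝ), Real.exp (-(x ^ k) / k) * x ^ (s - 1)

lemma int_exp (t a b : ℝ) (ht : 0 < t) :
    ∫ u in a..b, Real.exp (-(u * t)) = (Real.exp (-(a*t)) - Real.exp (-(b*t))) / t := by
  have h : ∀ u : ℝ, HasDerivAt (fun u => -Real.exp (-(u * t)) / t) (Real.exp (-(u * t))) u := by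
    intro u
    have h1 : HasDerivAt (fun u : ℝ => -(u * t)) (-t) u := by
      exact (hasDerivAt_mul_const t).neg
    have h2 := (Real.hasDerivAt_exp (-(u*t))).comp u h1
    have h3 := (h2.neg).div_const t
    refine HasDerivAt.congr_deriv h3 ?_
    simp [ht.ne']
  rw [intervalIntegral.integral_eq_sub_of_hasDerivAt (fun u _ => h u)
    ((Real.continuous_exp.comp (by continuity)).intervalIntegrable a b)]
  field_simp
  ring

lemma mono_exp (t1 t2 a b : ℝ) (ht1 : 0 < t1) (h12 : t1 ≤ t2) (ha : 0 < a) (hab : a ≤ b) :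
    (Real.exp (-(a*t2)) - Real.exp (-(b*t2))) / t2 ≤ (Real.exp (-(a*t1)) - Real.exp (-(b*t1))) / t1 := by
  rw [← int_exp t1 a b ht1, ← int_exp t2 a b (ht1.trans_le h12)]
  apply intervalIntegral.integral_mono_on hab
  · exact (Real.continuous_exp.comp (by continuity)).intervalIntegrable a b
  · exact (Real.continuous_exp.comp (by continuity)).intervalIntegrable a b
  · intro u hu
    have hu0 : 0 < u := ha.trans_le hu.1
    apply Real.exp_le_exp.2
    nlinarith

-- D q t s1 s2 := (q^(t*s1) - q^(t*s2)) / (t*(1 - q^t))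
lemma D_nonneg (q t s1 s2 : ℝ) (hq0 : 0 < q) (hq1 : q < 1) (ht : 0 < t) (h12 : s1 ≤ s2) :
    0 ≤ (q ^ (t*s1) - q ^ (t*s2)) / (t * (1 - q ^ t)) := by
  apply div_nonneg
  · have := Real.rpow_le_rpow_of_exponent_ge hq0 hq1.le
      (mul_le_mul_of_nonneg_left h12 ht.le)
    linarith
  · have : q ^ t < 1 := Real.rpow_lt_one hq0.le hq1 ht
    nlinarith

lemma D_mono (q t1 t2 s1 s2 : ℝ) (hq0 : 0 < q) (hq1 : q < 1) (ht1 : 0 < t1) (ht12 : t1 ≤ t2)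
    (hs1 : 0 < s1) (h12 : s1 ≤ s2) :
    (q ^ (t2*s1) - q ^ (t2*s2)) / (t2 * (1 - q ^ t2)) ≤
      (q ^ (t1*s1) - q ^ (t1*s2)) / (t1 * (1 - q ^ t1)) := by
  have ht2 : 0 < t2 := ht1.trans_le ht12
  have key : ∀ t : ℝ, 0 < t →
      (q ^ (t*s1) - q ^ (t*s2)) / (t * (1 - q ^ t)) =
        ∑' j : ℕ, (q ^ (t*s1) - q ^ (t*s2)) / t * (q ^ t) ^ j := by
    intro t ht
    have hr1 : q ^ t < 1 := Real.rpow_lt_one hq0.le hq1 ht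
    have hr0 : (0:ℝ) ≤ q ^ t := (Real.rpow_pos_of_pos hq0 t).le
    rw [tsum_mul_left, tsum_geometric_of_lt_one hr0 hr1]
    rw [div_mul_eq_div_div, div_eq_mul_inv ((q:ℝ) ^ (t*s1) - q ^ (t*s2)) t]
    rw [div_eq_mul_inv]
  rw [key t1 ht1, key t2 ht2]
  have hterm : ∀ (t : ℝ), 0 < t → ∀ j : ℕ,
      (q ^ (t*s1) - q ^ (t*s2)) / t * (q ^ t) ^ j =
        (Real.exp (-((-Real.log q * (s1 + j)) * t)) - Real.exp (-((-Real.log q * (s2 + j)) * t))) / t := by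
    intro t ht j
    have hrw : ∀ s : ℝ, q ^ (t*s) * (q ^ t) ^ j = Real.exp (-((-Real.log q * (s + j)) * t)) := by
      intro s
      rw [← Real.rpow_natCast (q ^ t) j, ← Real.rpow_mul hq0.le,
        ← Real.rpow_add hq0, Real.rpow_def_of_pos hq0]
      ring_nf
    rw [div_mul_eq_mul_div, ← hrw s1, ← hrw s2]
    ring
  have hlogq : 0 < -Real.log q := by
    have := Real.log_neg hq0 hq1
    linarith
  apply Summable.tsum_le_tsum
  · intro j
    rw [hterm t1 ht1 j, hterm t2 ht2 j]
    apply mono_exp t1 t2 _ _ ht1 ht12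
    · positivity
    · have : (0:ℝ) ≤ (j:ℝ) := Nat.cast_nonneg j
      nlinarith
  · exact (summable_geometric_of_lt_one (Real.rpow_pos_of_pos hq0 t2).le
      (Real.rpow_lt_one hq0.le hq1 ht2)).mul_left _
  · exact (summable_geometric_of_lt_one (Real.rpow_pos_of_pos hq0 t1).le
      (Real.rpow_lt_one hq0.le hq1 ht1)).mul_left _

lemma sumA (q s : ℝ) (hq0 : 0 < q) (hq1 : q < 1) (hs : 0 < s) :
    Summable (fun n : ℕ => q ^ (((n : ℝ) + 1) * s) / (((n : ℝ) + 1) * (1 - q ^ (n + 1)))) := by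
  have hqs1 : q ^ s < 1 := Real.rpow_lt_one hq0.le hq1 hs
  have hqs0 : 0 ≤ q ^ s := (Real.rpow_pos_of_pos hq0 s).le
  apply Summable.of_nonneg_of_le (f := fun n : ℕ => (1 - q)⁻¹ * (q ^ s) ^ (n+1))
  · intro n
    have h1 : q ^ (n+1) < 1 := pow_lt_one₀ hq0.le hq1 (Nat.succ_ne_zero n)
    apply div_nonneg (Real.rpow_pos_of_pos hq0 _).le
    have : (0:ℝ) ≤ (n:ℝ) := Nat.cast_nonneg n
    nlinarith
  · intro n
    have hnum : q ^ (((n : ℝ) + 1) * s) = (q ^ s) ^ (n + 1) := by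
      rw [mul_comm, Real.rpow_mul hq0.le, ← Real.rpow_natCast (q ^ s) (n+1)]
      push_cast; ring_nf
    have hq1n : q ^ (n+1) ≤ q := by
      calc q ^ (n+1) ≤ q ^ 1 := pow_le_pow_of_le_one hq0.le hq1.le (by omega)
      _ = q := pow_one q
    have hd : 1 - q ≤ ((n : ℝ) + 1) * (1 - q ^ (n + 1)) := by
      have h1 : (1:ℝ) ≤ (n:ℝ) + 1 := by have := Nat.cast_nonneg (α := ℝ) n; linarith
      nlinarith [pow_lt_one₀ hq0.le hq1 (Nat.succ_ne_zero n)]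
    rw [hnum, div_le_iff₀ (by nlinarith [pow_lt_one₀ hq0.le hq1 (Nat.succ_ne_zero n)])]
    rw [inv_mul_eq_div, div_mul_eq_mul_div, le_div_iff₀ (by linarith)]
    have : (0:ℝ) ≤ (q ^ s) ^ (n+1) := by positivity
    nlinarith
  · exact ((summable_geometric_of_lt_one hqs0 hqs1).mul_left _).comp_injective (add_left_injective 1)

lemma sumB (q k s : ℝ) (hq0 : 0 < q) (hq1 : q < 1) (hk : 1 ≤ k) (hs : 0 < s) :
    Summable (fun n : ℕ => q ^ (((n : ℝ) + 1) * k * s) /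
      (((n : ℝ) + 1) * k * (1 - q ^ (((n : ℝ) + 1) * k)))) := by
  have hk0 : 0 < k := lt_of_lt_of_le one_pos hk
  have hqk1 : q ^ (k*s) < 1 := Real.rpow_lt_one hq0.le hq1 (by positivity)
  have hqk0 : 0 ≤ q ^ (k*s) := (Real.rpow_pos_of_pos hq0 _).le
  have hqkk : q ^ k < 1 := Real.rpow_lt_one hq0.le hq1 hk0
  apply Summable.of_nonneg_of_le (f := fun n : ℕ => (k * (1 - q ^ k))⁻¹ * (q ^ (k*s)) ^ (n+1))
  · intro n
    have h1 : q ^ (((n:ℝ) + 1) * k) < 1 := Real.rpow_lt_one hq0.le hq1 (by positivity)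
    have h2 : (0:ℝ) < ((n:ℝ)+1) * k := by positivity
    apply div_nonneg (Real.rpow_pos_of_pos hq0 _).le
    nlinarith
  · intro n
    have hnum : q ^ (((n : ℝ) + 1) * k * s) = (q ^ (k*s)) ^ (n + 1) := by
      rw [← Real.rpow_natCast (q ^ (k*s)) (n+1), ← Real.rpow_mul hq0.le]
      push_cast; ring_nf
    have hq1n : q ^ (((n:ℝ)+1) * k) ≤ q ^ k := by
      apply Real.rpow_le_rpow_of_exponent_ge hq0 hq1.le
      nlinarith [Nat.cast_nonneg (α := ℝ) n]
    have hd : k * (1 - q ^ k) ≤ ((n : ℝ) + 1) * k * (1 - q ^ (((n:ℝ) + 1) * k)) := by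
      have h1 : (1:ℝ) ≤ (n:ℝ) + 1 := by have := Nat.cast_nonneg (α := ℝ) n; linarith
      have hQ1 : q ^ (((n:ℝ)+1) * k) < 1 := lt_of_le_of_lt hq1n hqkk
      nlinarith [mul_nonneg (sub_nonneg.2 h1) (mul_nonneg hk0.le (sub_nonneg.2 hQ1.le)),
        mul_nonneg hk0.le (sub_nonneg.2 hq1n)]
    rw [hnum, div_le_iff₀ (by nlinarith [Real.rpow_lt_one hq0.le hq1 (show (0:ℝ) < ((n:ℝ)+1)*k by positivity)])]
    rw [inv_mul_eq_div, div_mul_eq_mul_div, le_div_iff₀ (by nlinarith)]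
    have : (0:ℝ) ≤ (q ^ (k*s)) ^ (n+1) := by positivity
    nlinarith
  · exact ((summable_geometric_of_lt_one hqk0 hqk1).mul_left _).comp_injective (add_left_injective 1)

noncomputable def AA (q s : ℝ) : ℝ :=
  ∑' n : ℕ, q ^ (((n : ℝ) + 1) * s) / (((n : ℝ) + 1) * (1 - q ^ (n + 1)))
noncomputable def BB (q k s : ℝ) : ℝ :=
  ∑' n : ℕ, q ^ (((n : ℝ) + 1) * k * s) / (((n : ℝ) + 1) * k * (1 - q ^ (((n : ℝ) + 1) * k)))

lemma keymono (q k lam mu s1 s2 : ℝ) (hq0 : 0 < q) (hq1 : q < 1) (hk : 1 ≤ k)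
    (hmu : 0 < mu) (hlm : mu ≤ lam) (hs1 : 0 < s1) (h12 : s1 ≤ s2) :
    lam * AA q s2 - mu * BB q k s2 ≤ lam * AA q s1 - mu * BB q k s1 := by
  have hs2 : 0 < s2 := hs1.trans_le h12
  have hA1 := sumA q s1 hq0 hq1 hs1
  have hA2 := sumA q s2 hq0 hq1 hs2
  have hB1 := sumB q k s1 hq0 hq1 hk hs1
  have hB2 := sumB q k s2 hq0 hq1 hk hs2
  -- difference of A terms equals D at t = n+1
  have hDA : ∀ n : ℕ,
      q ^ (((n : ℝ) + 1) * s1) / (((n : ℝ) + 1) * (1 - q ^ (n + 1))) -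
        q ^ (((n : ℝ) + 1) * s2) / (((n : ℝ) + 1) * (1 - q ^ (n + 1))) =
      (q ^ (((n:ℝ)+1)*s1) - q ^ (((n:ℝ)+1)*s2)) / (((n:ℝ)+1) * (1 - q ^ ((n:ℝ)+1))) := by
    intro n
    rw [div_sub_div_same]
    congr 2
    rw [← Real.rpow_natCast q (n+1)]
    push_cast
    ring_nf
  have hDB : ∀ n : ℕ,
      q ^ (((n : ℝ) + 1) * k * s1) / (((n : ℝ) + 1) * k * (1 - q ^ (((n : ℝ) + 1) * k))) -
        q ^ (((n : ℝ) + 1) * k * s2) / (((n : ℝ) + 1) * k * (1 - q ^ (((n : ℝ) + 1) * k))) =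
      (q ^ ((((n:ℝ)+1)*k)*s1) - q ^ ((((n:ℝ)+1)*k)*s2)) / ((((n:ℝ)+1)*k) * (1 - q ^ (((n:ℝ)+1)*k))) := by
    intro n
    rw [div_sub_div_same]
  have hn1 : ∀ n : ℕ, (0:ℝ) < (n:ℝ) + 1 := by
    intro n; positivity
  have hAB : BB q k s1 - BB q k s2 ≤ AA q s1 - AA q s2 := by
    unfold AA BB
    rw [← Summable.tsum_sub hA1 hA2, ← Summable.tsum_sub hB1 hB2]
    apply Summable.tsum_le_tsum _ (hB1.sub hB2) (hA1.sub hA2)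
    intro n
    rw [hDA n, hDB n]
    exact D_mono q ((n:ℝ)+1) (((n:ℝ)+1)*k) s1 s2 hq0 hq1 (hn1 n)
      (by nlinarith [hn1 n]) hs1 h12
  have hB0 : 0 ≤ BB q k s1 - BB q k s2 := by
    unfold BB
    rw [← Summable.tsum_sub hB1 hB2]
    apply tsum_nonneg
    intro n
    rw [hDB n]
    exact D_nonneg q (((n:ℝ)+1)*k) s1 s2 hq0 hq1 (by nlinarith [hn1 n]) h12
  nlinarith [hAB, hB0]

lemma mainstep (q k lam mu s s1 s2 : ℝ) (hq0 : 0 < q) (hq1 : q < 1) (hk : 1 ≤ k)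
    (hmu : 0 < mu) (hlm : mu ≤ lam) (hs1 : 0 < s1) (h12 : s1 ≤ s2) :
    (1 - q) ^ (lam * (s2 - s)) * (Gammaq q s2) ^ lam /
        ((1 - q) ^ (mu / k * (s2 - s)) * (Gammaqk q k s2) ^ mu) ≤
      (1 - q) ^ (lam * (s1 - s)) * (Gammaq q s1) ^ lam /
        ((1 - q) ^ (mu / k * (s1 - s)) * (Gammaqk q k s1) ^ mu) := by
  have h1q : 0 < 1 - q := by linarith
  have hk0 : (0:ℝ) < k := lt_of_lt_of_le one_pos hk
  set L := Real.log (1 - q) with hL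
  have hGq : ∀ u : ℝ, Gammaq q u = Real.exp (L * (-u) + AA q u) := by
    intro u
    rw [Gammaq, AA, Real.exp_add, Real.rpow_def_of_pos h1q]
  have hGqk : ∀ u : ℝ, Gammaqk q k u = Real.exp (L * (-u/k) + BB q k u) := by
    intro u
    rw [Gammaqk, BB, Real.exp_add, Real.rpow_def_of_pos h1q]
  have hform : ∀ u : ℝ,
      (1 - q) ^ (lam * (u - s)) * (Gammaq q u) ^ lam /
        ((1 - q) ^ (mu / k * (u - s)) * (Gammaqk q k u) ^ mu) =
      Real.exp (L * (lam * (u - s)) + (L * (-u) + AA q u) * lam -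
        (L * (mu / k * (u - s)) + (L * (-u/k) + BB q k u) * mu)) := by
    intro u
    rw [hGq u, hGqk u, Real.rpow_def_of_pos h1q (lam * (u - s)),
      Real.rpow_def_of_pos h1q (mu / k * (u - s)), ← Real.exp_mul, ← Real.exp_mul,
      ← Real.exp_add, ← Real.exp_add, ← Real.exp_sub]
  rw [hform s1, hform s2, Real.exp_le_exp]
  have key := keymono q k lam mu s1 s2 hq0 hq1 hk hmu hlm hs1 h12
  have hid : ∀ u : ℝ,
      L * (lam * (u - s)) + (L * (-u) + AA q u) * lam -
        (L * (mu / k * (u - s)) + (L * (-u/k) + BB q k u) * mu) =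
      (lam * AA q u - mu * BB q k u) + (-(L * lam * s) + L * mu * s / k) := by
    intro u
    field_simp
    ring
  rw [hid s1, hid s2]
  linarith

theorem stmt5 (g : ℝ → ℝ) (hgpos : ∀ t ∈ Set.Ici (0 : ℝ), 0 < g t)
    (hgmono : MonotoneOn g (Set.Ici (0 : ℝ)))
    (hgdiff : DifferentiableOn ℝ g (Set.Ici (0 : ℝ)))
    (q : ℝ) (hq : q ∈ Set.Ioo (0 : ℝ) 1) (k : ℝ) (hk : 1 ≤ k)
    (lam mu : ℝ) (hmu : 0 < mu) (hlm : mu ≤ lam)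
    (x y : ℝ) (hx : 0 < x) (hxy : x < y) :
    (1 - q) ^ (lam * (g 0 - g x)) * (Gammaq q (g 0)) ^ lam /
        ((1 - q) ^ (mu / k * (g 0 - g x)) * (Gammaqk q k (g 0)) ^ mu) ≥
      (Gammaq q (g x)) ^ lam / (Gammaqk q k (g x)) ^ mu ∧
    (Gammaq q (g x)) ^ lam / (Gammaqk q k (g x)) ^ mu ≥
      (1 - q) ^ (lam * (g y - g x)) * (Gammaq q (g y)) ^ lam /
        ((1 - q) ^ (mu / k * (g y - g x)) * (Gammaqk q k (g y)) ^ mu) := by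
  have hq0 := hq.1
  have hq1 := hq.2
  have h0m : (0:ℝ) ∈ Set.Ici (0:ℝ) := Set.mem_Ici.2 le_rfl
  have hxm : x ∈ Set.Ici (0:ℝ) := Set.mem_Ici.2 hx.le
  have hym : y ∈ Set.Ici (0:ℝ) := Set.mem_Ici.2 (hx.trans hxy).le
  have hg0 : 0 < g 0 := hgpos 0 h0m
  have hgx : 0 < g x := hgpos x hxm
  have h0x : g 0 ≤ g x := hgmono h0m hxm hx.le
  have hxy' : g x ≤ g y := hgmono hxm hym hxy.le
  constructor
  · have h := mainstep q k lam mu (g x) (g 0) (g x) hq0 hq1 hk hmu hlm hg0 h0x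
    simpa [sub_self, mul_zero, Real.rpow_zero, one_mul] using h
  · have h := mainstep q k lam mu (g x) (g x) (g y) hq0 hq1 hk hmu hlm hgx hxy'
    simpa [sub_self, mul_zero, Real.rpow_zero, one_mul] using h
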